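/- Let λ ∈ ℝ^d be a probability vector with λ₁^↓ its largest entry, and suppose F is a Hermitian operator on ℂ^d ⊗ ℂ^d with ρ_λ ≤ F ≤ 𝟙, where ρ_λ = ∑_{i,j} √(λ_i λ_j)|ii⟩⟨jj|. Then the operator norm of the partial transpose satisfies ‖F^Γ‖_∞ ≥ λ₁^↓, and equality is achieved by F = ρ_λ. (Key step: for F = ρ_λ + A with A ≥ 0, ⟨11|F^Γ|11⟩ = λ₁^↓ + ⟨11|A|11⟩ ≥ λ₁^↓, using that |11⟩⟨11|^Γ = |11⟩⟨11| and the Schmidt basis is ordered so λ₁ = λ₁^↓.) -/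

import Mathlib

open scoped ComplexOrder

/-- The basis vector `|ij⟩` of `ℂ^d ⊗ ℂ^d`. -/
def ketC {d : ℕ} (i j : Fin d) : Fin d × Fin d → ℂ := fun p => if p = (i, j) then 1 else 0

/-- Partial transpose: `(|ij⟩⟨kl|)^Γ = |il⟩⟨kj|`. -/
def ptransC {d : ℕ} (M : Matrix (Fin d × Fin d) (Fin d × Fin d) ℂ) :
    Matrix (Fin d × Fin d) (Fin d × Fin d) ℂ :=
  fun p q => M (p.1, q.2) (q.1, p.2)

lemma coord_le_norm {ι : Type*} [Fintype ι] (y : EuclideanSpace ℂ ι) (p : ι) :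
    ‖y p‖ ≤ ‖y‖ := by
  rw [EuclideanSpace.norm_eq]
  have h : ‖y p‖ ^ 2 ≤ ∑ i, ‖y i‖ ^ 2 :=
    Finset.single_le_sum (f := fun i => ‖y i‖ ^ 2) (fun i _ => sq_nonneg _) (Finset.mem_univ p)
  calc ‖y p‖ = Real.sqrt (‖y p‖ ^ 2) := by rw [Real.sqrt_sq (norm_nonneg _)]
    _ ≤ Real.sqrt (∑ i, ‖y i‖ ^ 2) := Real.sqrt_le_sqrt h

lemma clm_apply {d : ℕ} (M : Matrix (Fin d × Fin d) (Fin d × Fin d) ℂ)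
    (x : EuclideanSpace ℂ (Fin d × Fin d)) (p : Fin d × Fin d) :
    (Matrix.toEuclideanCLM (𝕜 := ℂ) M x) p = ∑ q, M p q * x q := by
  have := congrFun (Matrix.ofLp_toEuclideanCLM (𝕜 := ℂ) M x) p
  simpa [Matrix.mulVec, dotProduct] using this

lemma diag_le_norm {d : ℕ} (M : Matrix (Fin d × Fin d) (Fin d × Fin d) ℂ) (p : Fin d × Fin d) :
    (M p p).re ≤ ‖Matrix.toEuclideanCLM (𝕜 := ℂ) M‖ := by
  set e : EuclideanSpace ℂ (Fin d × Fin d) := EuclideanSpace.single p 1 with he_def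
  have he : ‖e‖ = 1 := by simp [he_def]
  have h1 : (Matrix.toEuclideanCLM (𝕜 := ℂ) M e) p = M p p := by
    rw [clm_apply]
    simp [he_def, EuclideanSpace.single_apply]
  calc (M p p).re ≤ ‖M p p‖ := Complex.re_le_norm _
    _ = ‖(Matrix.toEuclideanCLM (𝕜 := ℂ) M e) p‖ := by rw [h1]
    _ ≤ ‖Matrix.toEuclideanCLM (𝕜 := ℂ) M e‖ := coord_le_norm _ _
    _ ≤ ‖Matrix.toEuclideanCLM (𝕜 := ℂ) M‖ * ‖e‖ := (Matrix.toEuclideanCLM (𝕜 := ℂ) M).le_opNorm e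
    _ = ‖Matrix.toEuclideanCLM (𝕜 := ℂ) M‖ := by rw [he, mul_one]

/-- If `ρ_λ ≤ F ≤ 𝟙` (with `λ` ordered nonincreasingly, so `λ₁^↓ = lam 0`),
then the operator norm of `F^Γ` is at least `λ₁^↓`, with equality for `F = ρ_λ`. -/
theorem stmt11 (d : ℕ) (hd : 0 < d) (lam : Fin d → ℝ)
    (hnn : ∀ i, 0 ≤ lam i) (hsum : ∑ i, lam i = 1)
    (hsorted : ∀ i j : Fin d, i ≤ j → lam j ≤ lam i)
    (rho : Matrix (Fin d × Fin d) (Fin d × Fin d) ℂ)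
    (hrho : rho = ∑ i, ∑ j,
      (Real.sqrt (lam i * lam j) : ℂ) • Matrix.vecMulVec (ketC i i) (ketC j j))
    (F : Matrix (Fin d × Fin d) (Fin d × Fin d) ℂ) (hF : F.IsHermitian)
    (hFlow : (F - rho).PosSemidef) (hFup : ((1 : Matrix (Fin d × Fin d) (Fin d × Fin d) ℂ) - F).PosSemidef) :
    lam ⟨0, hd⟩ ≤ ‖Matrix.toEuclideanCLM (𝕜 := ℂ) (ptransC F)‖ ∧
    ‖Matrix.toEuclideanCLM (𝕜 := ℂ) (ptransC rho)‖ = lam ⟨0, hd⟩ := by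
  set z : Fin d := ⟨0, hd⟩ with hz
  have hzle : ∀ i : Fin d, lam i ≤ lam z := fun i => hsorted z i (by simp [hz, Fin.le_def])
  have hz0 : 0 ≤ lam z := hnn z
  -- entries of rho
  have hrhoE : ∀ a b c e : Fin d,
      rho (a, b) (c, e) = if a = b ∧ c = e then (Real.sqrt (lam a * lam c) : ℂ) else 0 := by
    intro a b c e
    subst hrho
    simp only [Matrix.sum_apply, Matrix.smul_apply, Matrix.vecMulVec_apply, ketC, smul_eq_mul]
    rw [Finset.sum_eq_single a]
    · rw [Finset.sum_eq_single c]
      · by_cases h1 : a = b <;> by_cases h2 : c = e <;>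
          simp [Prod.ext_iff, h1, h2, eq_comm]
      · intro j _ hj
        simp [Prod.ext_iff, hj, Ne.symm hj]
      · simp
    · intro i _ hi
      apply Finset.sum_eq_zero
      intro j _
      simp [Prod.ext_iff, hi, Ne.symm hi]
    · simp
  -- entries of the partial transpose of rho
  have hptE : ∀ p q : Fin d × Fin d,
      ptransC rho p q = if q = (p.2, p.1) then (Real.sqrt (lam p.1 * lam p.2) : ℂ) else 0 := by
    intro p q
    show rho (p.1, q.2) (q.1, p.2) = _
    rw [hrhoE]
    by_cases h1 : p.1 = q.2 <;> by_cases h2 : q.1 = p.2 <;>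
      simp [Prod.ext_iff, h1, h2, eq_comm]
  -- applying the CLM of ptransC rho
  have happ : ∀ (x : EuclideanSpace ℂ (Fin d × Fin d)) (p : Fin d × Fin d),
      (Matrix.toEuclideanCLM (𝕜 := ℂ) (ptransC rho) x) p
        = (Real.sqrt (lam p.1 * lam p.2) : ℂ) * x (p.2, p.1) := by
    intro x p
    rw [clm_apply]
    rw [Finset.sum_eq_single (p.2, p.1)]
    · rw [hptE]; simp
    · intro q _ hq; rw [hptE]; simp [hq]
    · simp
  constructor
  · -- lower bound for F
    have hdiag : (ptransC F) ((z, z)) ((z, z)) = F (z, z) (z, z) := rfl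
    have hA : 0 ≤ (F - rho) (z, z) (z, z) := by
      have := hFlow.dotProduct_mulVec_nonneg (Pi.single (z, z) 1)
      simpa [dotProduct, Matrix.mulVec_single, Pi.single_apply, mul_comm] using this
    have hAre : 0 ≤ ((F - rho) (z, z) (z, z)).re := by
      rw [Complex.le_def] at hA
      simpa using hA.1
    have hFre : lam z ≤ (F (z, z) (z, z)).re := by
      have h2 : F (z, z) (z, z) = rho (z, z) (z, z) + (F - rho) (z, z) (z, z) := by
        simp [Matrix.sub_apply]
      rw [h2, Complex.add_re]
      have h3 : (rho (z, z) (z, z)).re = lam z := by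
        rw [hrhoE]
        simp [Real.sqrt_mul_self hz0]
      rw [h3]
      linarith
    calc lam z ≤ (F (z, z) (z, z)).re := hFre
      _ = ((ptransC F) ((z, z)) ((z, z))).re := by rw [hdiag]
      _ ≤ ‖Matrix.toEuclideanCLM (𝕜 := ℂ) (ptransC F)‖ := diag_le_norm _ _
  · -- equality for rho
    refine le_antisymm ?_ ?_
    · refine ContinuousLinearMap.opNorm_le_bound _ hz0 ?_
      intro x
      have hnonneg : (0:ℝ) ≤ lam z * ‖x‖ := mul_nonneg hz0 (norm_nonneg _)
      have hsq : ‖Matrix.toEuclideanCLM (𝕜 := ℂ) (ptransC rho) x‖ ^ 2 ≤ (lam z * ‖x‖) ^ 2 := by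
        rw [EuclideanSpace.norm_eq, Real.sq_sqrt (by positivity)]
        have hxnorm : ∑ q : Fin d × Fin d, ‖x q‖ ^ 2 = ‖x‖ ^ 2 := by
          rw [EuclideanSpace.norm_eq, Real.sq_sqrt (by positivity)]
        calc ∑ p : Fin d × Fin d, ‖(Matrix.toEuclideanCLM (𝕜 := ℂ) (ptransC rho) x) p‖ ^ 2
            = ∑ p : Fin d × Fin d, (lam p.1 * lam p.2) * ‖x (p.2, p.1)‖ ^ 2 := by
              refine Finset.sum_congr rfl fun p _ => ?_
              rw [happ, norm_mul, mul_pow, Complex.norm_real, Real.norm_eq_abs,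
                abs_of_nonneg (Real.sqrt_nonneg _),
                Real.sq_sqrt (mul_nonneg (hnn _) (hnn _))]
          _ = ∑ q : Fin d × Fin d, (lam q.2 * lam q.1) * ‖x q‖ ^ 2 := by
              exact Fintype.sum_equiv (Equiv.prodComm _ _) _ _ (fun p => rfl)
          _ ≤ ∑ q : Fin d × Fin d, (lam z * lam z) * ‖x q‖ ^ 2 := by
              refine Finset.sum_le_sum fun q _ => ?_
              have h4 := mul_le_mul (hzle q.2) (hzle q.1) (hnn q.1) hz0
              exact mul_le_mul_of_nonneg_right h4 (sq_nonneg _)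
          _ = (lam z * ‖x‖) ^ 2 := by
              rw [← Finset.mul_sum, hxnorm]; ring
      calc ‖Matrix.toEuclideanCLM (𝕜 := ℂ) (ptransC rho) x‖
          = Real.sqrt (‖Matrix.toEuclideanCLM (𝕜 := ℂ) (ptransC rho) x‖ ^ 2) := by
            rw [Real.sqrt_sq (norm_nonneg _)]
        _ ≤ Real.sqrt ((lam z * ‖x‖) ^ 2) := Real.sqrt_le_sqrt hsq
        _ = lam z * ‖x‖ := Real.sqrt_sq hnonneg
    · have h5 : ((ptransC rho) ((z, z)) ((z, z))).re = lam z := by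
        show (rho (z, z) (z, z)).re = lam z
        rw [hrhoE]
        simp [Real.sqrt_mul_self hz0]
      calc lam z = ((ptransC rho) ((z, z)) ((z, z))).re := h5.symm
        _ ≤ ‖Matrix.toEuclideanCLM (𝕜 := ℂ) (ptransC rho)‖ := diag_le_norm _ _
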